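/- (Result 1, unbiasedness of the IPW estimating function.) For every integrable real-valued measurable function g of (Y, V), E[(R/π(V)) · g(Y, V) − ((1 − R)/(1 − π(V))) · E[g(Y, V) | V, L]] = 0. -/

import Mathlib

open MeasureTheory ProbabilityTheory

lemma condexp_R_pair
    {Ω : Type*} {mΩ : MeasurableSpace Ω} [StandardBorelSpace Ω] [Nonempty Ω]
    {P : Measure Ω} [IsProbabilityMeasure P]
    {𝒱 𝒲 : Type*} [m𝒱 : MeasurableSpace 𝒱] [m𝒲 : MeasurableSpace 𝒲]
    {V : Ω → 𝒱} {W : Ω → 𝒲} (hV : Measurable V) (hW : Measurable W)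
    {R : Ω → ℝ} (hR : Measurable R) (hR01 : ∀ ω, R ω = 0 ∨ R ω = 1)
    {π : 𝒱 → ℝ} (hπ : Measurable π)
    (hπV : P[R | MeasurableSpace.comap V m𝒱] =ᵐ[P] fun ω => π (V ω))
    (hπ1 : ∀ᵐ ω ∂P, |π (V ω)| ≤ 1)
    (hign : CondIndepFun (MeasurableSpace.comap V m𝒱) (hV.comap_le) R W P) :
    P[R | MeasurableSpace.comap (fun ω => (V ω, W ω)) inferInstance] =ᵐ[P]
      fun ω => π (V ω) := by
  have hVW : Measurable (fun ω => (V ω, W ω)) := hV.prodMk hW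
  have hle : MeasurableSpace.comap (fun ω => (V ω, W ω))
      (inferInstance : MeasurableSpace (𝒱 × 𝒲)) ≤ mΩ := hVW.comap_le
  have hmV_le : MeasurableSpace.comap V m𝒱 ≤
      MeasurableSpace.comap (fun ω => (V ω, W ω)) inferInstance := by
    have h1 : MeasurableSpace.comap (fun ω => (V ω, W ω)) (MeasurableSpace.comap Prod.fst m𝒱)
        = MeasurableSpace.comap V m𝒱 :=
      MeasurableSpace.comap_comp (m := m𝒱) (f := Prod.fst) (g := fun ω => (V ω, W ω))
    exact h1.symm.le.trans (MeasurableSpace.comap_mono le_sup_left)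
  have hVmeas : Measurable[MeasurableSpace.comap V m𝒱] V := Measurable.of_comap_le le_rfl
  have hπV_sm : StronglyMeasurable[MeasurableSpace.comap V m𝒱] (fun ω => π (V ω)) :=
    (hπ.comp hVmeas).stronglyMeasurable
  have intR : Integrable R P := by
    refine Integrable.mono' (integrable_const 1) hR.aestronglyMeasurable ?_
    filter_upwards with ω
    rcases hR01 ω with h | h <;> simp [h]
  have intπV : Integrable (fun ω => π (V ω)) P := by
    refine Integrable.mono' (integrable_const 1) (hπ.comp hV).aestronglyMeasurable ?_
    filter_upwards [hπ1] with ω h using h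
  have htot : ∫ ω, π (V ω) ∂P = ∫ ω, R ω ∂P := by
    rw [← integral_congr_ae hπV, integral_condExp hV.comap_le]
  have hrect : ∀ a : Set 𝒱, MeasurableSet a → ∀ b : Set 𝒲, MeasurableSet b →
      ∫ ω in V ⁻¹' a ∩ W ⁻¹' b, π (V ω) ∂P = ∫ ω in V ⁻¹' a ∩ W ⁻¹' b, R ω ∂P := by
    intro a ha b hb
    have hsa : MeasurableSet[MeasurableSpace.comap V m𝒱] (V ⁻¹' a) := ⟨a, ha, rfl⟩
    have hWb : MeasurableSet (W ⁻¹' b) := hW hb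
    have ind_int : Integrable ((W ⁻¹' b).indicator fun _ => (1:ℝ)) P :=
      (integrable_const 1).indicator hWb
    have hRind : (fun ω => ((W ⁻¹' b).indicator (fun _ => (1:ℝ)) ω) * R ω)
        = (R ⁻¹' {1} ∩ W ⁻¹' b).indicator (fun _ => (1:ℝ)) := by
      funext ω
      rcases hR01 ω with h | h <;>
        by_cases hωb : ω ∈ W ⁻¹' b <;>
          simp [Set.indicator_apply, hωb, h]
    have hRall : R = (R ⁻¹' {1}).indicator (fun _ => (1:ℝ)) := by
      funext ω
      rcases hR01 ω with h | h <;> simp [Set.indicator_apply, h]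
    have hci := (condIndepFun_iff_condExp_inter_preimage_eq_mul hR hW).mp hign
      {1} b (measurableSet_singleton 1) hb
    have hR1 : (P⟦R ⁻¹' {1} | MeasurableSpace.comap V m𝒱⟧) =ᵐ[P] fun ω => π (V ω) := by
      refine Filter.EventuallyEq.trans ?_ hπV
      exact condExp_congr_ae (Filter.EventuallyEq.of_eq hRall.symm)
    have hpull : P[(fun ω => π (V ω) * (W ⁻¹' b).indicator (fun _ => (1:ℝ)) ω)
          | MeasurableSpace.comap V m𝒱]
        =ᵐ[P] fun ω => π (V ω) * (P⟦W ⁻¹' b | MeasurableSpace.comap V m𝒱⟧) ω := by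
      have h := condExp_mul_of_stronglyMeasurable_left (μ := P) hπV_sm
        (g := (W ⁻¹' b).indicator fun _ => (1:ℝ))
        (ind_int.bdd_mul (c := 1) (hπ.comp hV).aestronglyMeasurable
          (by filter_upwards [hπ1] with ω h using by simpa [Real.norm_eq_abs] using h))
        ind_int
      exact h
    calc ∫ ω in V ⁻¹' a ∩ W ⁻¹' b, π (V ω) ∂P
        = ∫ ω in V ⁻¹' a, (W ⁻¹' b).indicator (fun ω' => π (V ω')) ω ∂P :=
          (setIntegral_indicator hWb).symm
      _ = ∫ ω in V ⁻¹' a, π (V ω) * (W ⁻¹' b).indicator (fun _ => (1:ℝ)) ω ∂P := by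
          refine setIntegral_congr_fun (hV.comap_le _ hsa) (fun ω _ => ?_)
          by_cases hωb : ω ∈ W ⁻¹' b <;> simp [Set.indicator_apply, hωb]
      _ = ∫ ω in V ⁻¹' a,
            (P[(fun ω => π (V ω) * (W ⁻¹' b).indicator (fun _ => (1:ℝ)) ω)
              | MeasurableSpace.comap V m𝒱]) ω ∂P := by
          refine (setIntegral_condExp hV.comap_le ?_ hsa).symm
          exact ind_int.bdd_mul (c := 1) (hπ.comp hV).aestronglyMeasurable
            (by filter_upwards [hπ1] with ω h using by simpa [Real.norm_eq_abs] using h)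
      _ = ∫ ω in V ⁻¹' a, π (V ω) * (P⟦W ⁻¹' b | MeasurableSpace.comap V m𝒱⟧) ω ∂P := by
          refine setIntegral_congr_ae (hV.comap_le _ hsa) ?_
          filter_upwards [hpull] with ω h _ using h
      _ = ∫ ω in V ⁻¹' a, (P⟦R ⁻¹' {1} | MeasurableSpace.comap V m𝒱⟧) ω
            * (P⟦W ⁻¹' b | MeasurableSpace.comap V m𝒱⟧) ω ∂P := by
          refine setIntegral_congr_ae (hV.comap_le _ hsa) ?_
          filter_upwards [hR1] with ω h _ using by rw [h]
      _ = ∫ ω in V ⁻¹' a, (P⟦R ⁻¹' {1} ∩ W ⁻¹' b | MeasurableSpace.comap V m𝒱⟧) ω ∂P := by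
          refine setIntegral_congr_ae (hV.comap_le _ hsa) ?_
          filter_upwards [hci] with ω h _ using h.symm
      _ = ∫ ω in V ⁻¹' a, (R ⁻¹' {1} ∩ W ⁻¹' b).indicator (fun _ => (1:ℝ)) ω ∂P :=
          setIntegral_condExp hV.comap_le
            ((integrable_const 1).indicator ((hR (measurableSet_singleton 1)).inter hWb)) hsa
      _ = ∫ ω in V ⁻¹' a, (W ⁻¹' b).indicator (fun _ => (1:ℝ)) ω * R ω ∂P := by
          rw [hRind]
      _ = ∫ ω in V ⁻¹' a, (W ⁻¹' b).indicator R ω ∂P := by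
          refine setIntegral_congr_fun (hV.comap_le _ hsa) (fun ω _ => ?_)
          by_cases hωb : ω ∈ W ⁻¹' b <;> simp [Set.indicator_apply, hωb]
      _ = ∫ ω in V ⁻¹' a ∩ W ⁻¹' b, R ω ∂P := setIntegral_indicator hWb
  have hall : ∀ S : Set (𝒱 × 𝒲), MeasurableSet S →
      ∫ ω in (fun ω => (V ω, W ω)) ⁻¹' S, π (V ω) ∂P
        = ∫ ω in (fun ω => (V ω, W ω)) ⁻¹' S, R ω ∂P := by
    refine MeasurableSpace.induction_on_inter generateFrom_prod.symm isPiSystem_prod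
      (by simp) ?_ ?_ ?_
    · rintro t ⟨a, ha, b, hb, rfl⟩
      rw [Set.mk_preimage_prod]
      exact hrect a ha b hb
    · intro t ht hQ
      have hpre : MeasurableSet ((fun ω => (V ω, W ω)) ⁻¹' t) := hVW ht
      have h1 := integral_add_compl hpre intπV
      have h2 := integral_add_compl hpre intR
      have hc : (fun ω => (V ω, W ω)) ⁻¹' tᶜ = ((fun ω => (V ω, W ω)) ⁻¹' t)ᶜ := rfl
      rw [hc]
      linarith
    · intro f hdisj hmeas hQ
      rw [Set.preimage_iUnion,
        integral_iUnion (fun i => hVW (hmeas i))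
          (fun i j hij => (hdisj hij).preimage _) intπV.integrableOn,
        integral_iUnion (fun i => hVW (hmeas i))
          (fun i j hij => (hdisj hij).preimage _) intR.integrableOn]
      exact tsum_congr hQ
  refine (ae_eq_condExp_of_forall_setIntegral_eq hle intR
    (fun s _ _ => intπV.integrableOn) ?_ ?_).symm
  · rintro s ⟨S, hS, rfl⟩ _
    exact hall S hS
  · exact (hπV_sm.mono hmV_le).aestronglyMeasurable

/-- **Result 1.** Unbiasedness of the parallel IPW estimating function:
`E[(R/π(V)) ⬝ g(Y, V) − ((1 − R)/(1 − π(V))) ⬝ E[g(Y, V) | V, L]] = 0`. -/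
theorem ipw_estimating_function_unbiased
    {Ω : Type*} {mΩ : MeasurableSpace Ω} [StandardBorelSpace Ω] [Nonempty Ω]
    {P : Measure Ω} [IsProbabilityMeasure P]
    {𝒱 𝓛 𝒴 : Type*} [m𝒱 : MeasurableSpace 𝒱] [m𝓛 : MeasurableSpace 𝓛]
    [m𝒴 : MeasurableSpace 𝒴]
    (V : Ω → 𝒱) (L : Ω → 𝓛) (Y : Ω → 𝒴)
    (hV : Measurable V) (hL : Measurable L) (hY : Measurable Y)
    (R : Ω → ℝ) (hR : Measurable R) (hR01 : ∀ ω, R ω = 0 ∨ R ω = 1)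
    (π : 𝒱 → ℝ) (hπ : Measurable π)
    -- `π(V)` is a version of `E[R | σ(V)]`
    (hπV : P[R | MeasurableSpace.comap V m𝒱] =ᵐ[P] fun ω => π (V ω))
    -- positivity
    (δ : ℝ) (hδ0 : 0 < δ) (hδhalf : δ < 1 / 2)
    (hpos : ∀ᵐ ω ∂P, δ ≤ π (V ω) ∧ π (V ω) ≤ 1 - δ)
    -- ignorability: `R ⟂ (Y, L) | σ(V)`
    (hign : CondIndepFun (MeasurableSpace.comap V m𝒱) (hV.comap_le) R
      (fun ω => (Y ω, L ω)) P)
    (g : 𝒴 × 𝒱 → ℝ) (hg : Measurable g)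
    (hgint : Integrable (fun ω => g (Y ω, V ω)) P) :
    ∫ ω, ((R ω / π (V ω)) * g (Y ω, V ω)
        - ((1 - R ω) / (1 - π (V ω)))
          * (P[fun ω' => g (Y ω', V ω')
              | MeasurableSpace.comap (fun ω' => (V ω', L ω')) inferInstance]) ω) ∂P
      = 0 := by
  have hπ1 : ∀ᵐ ω ∂P, |π (V ω)| ≤ 1 := by
    filter_upwards [hpos] with ω ⟨h1, h2⟩
    rw [abs_le]; constructor <;> nlinarith
  -- conditional independence of R with Y and with L
  have hignY : CondIndepFun (MeasurableSpace.comap V m𝒱) (hV.comap_le) R Y P :=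
    hign.comp measurable_id measurable_fst
  have hignL : CondIndepFun (MeasurableSpace.comap V m𝒱) (hV.comap_le) R L P :=
    hign.comp measurable_id measurable_snd
  have hRY : P[R | MeasurableSpace.comap (fun ω => (V ω, Y ω)) inferInstance] =ᵐ[P]
      fun ω => π (V ω) :=
    condexp_R_pair hV hY hR hR01 hπ hπV hπ1 hignY
  have hRL : P[R | MeasurableSpace.comap (fun ω => (V ω, L ω)) inferInstance] =ᵐ[P]
      fun ω => π (V ω) :=
    condexp_R_pair hV hL hR hR01 hπ hπV hπ1 hignL
  have hVY : Measurable (fun ω => (V ω, Y ω)) := hV.prodMk hY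
  have hVL : Measurable (fun ω => (V ω, L ω)) := hV.prodMk hL
  set h : Ω → ℝ := P[fun ω' => g (Y ω', V ω')
      | MeasurableSpace.comap (fun ω' => (V ω', L ω')) inferInstance] with hdef
  have inth : Integrable h P := integrable_condExp
  -- the two auxiliary functions
  set φ : Ω → ℝ := fun ω => g (Y ω, V ω) / π (V ω) with hφdef
  set ψ : Ω → ℝ := fun ω => h ω / (1 - π (V ω)) with hψdef
  have hφm : Measurable φ := (hg.comp (hY.prodMk hV)).div (hπ.comp hV)
  have intφ : Integrable φ P := by
    refine Integrable.mono' (hgint.abs.const_mul δ⁻¹)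
      hφm.aestronglyMeasurable ?_
    filter_upwards [hpos] with ω ⟨h1, h2⟩
    rw [hφdef, Real.norm_eq_abs, abs_div]
    rw [inv_mul_eq_div]
    refine div_le_div_of_nonneg_left (abs_nonneg _) hδ0 ?_ |>.trans ?_
    · exact le_trans h1 (le_abs_self _)
    · exact le_of_eq rfl
  have intψ : Integrable ψ P := by
    refine Integrable.mono' (inth.abs.const_mul δ⁻¹) ?_ ?_
    · exact ((stronglyMeasurable_condExp.mono hVL.comap_le).measurable.div
        (measurable_const.sub (hπ.comp hV))).aestronglyMeasurable
    filter_upwards [hpos] with ω ⟨h1, h2⟩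
    rw [hψdef, Real.norm_eq_abs, abs_div, inv_mul_eq_div]
    refine div_le_div_of_nonneg_left (abs_nonneg _) hδ0 ?_ |>.trans (le_of_eq rfl)
    have : δ ≤ 1 - π (V ω) := by linarith
    exact le_trans this (le_abs_self _)
  have intR : Integrable R P := by
    refine Integrable.mono' (integrable_const 1) hR.aestronglyMeasurable ?_
    filter_upwards with ω; rcases hR01 ω with hh | hh <;> simp [hh]
  have int1R : Integrable (fun ω => 1 - R ω) P := (integrable_const 1).sub intR
  have intφR : Integrable (fun ω => φ ω * R ω) P := by
    have := intφ.bdd_mul (f := R) (c := 1) hR.aestronglyMeasurable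
      (by filter_upwards with ω; rcases hR01 ω with hh | hh <;> simp [hh])
    exact this.congr (by filter_upwards with ω using mul_comm _ _)
  have intψ1R : Integrable (fun ω => ψ ω * (1 - R ω)) P := by
    have := intψ.bdd_mul (f := fun ω => 1 - R ω) (c := 1)
      (measurable_const.sub hR).aestronglyMeasurable
      (by filter_upwards with ω; rcases hR01 ω with hh | hh <;> simp [hh])
    exact this.congr (by filter_upwards with ω using mul_comm _ _)
  -- rewrite the integrand
  have hintegrand : ∀ ω, (R ω / π (V ω)) * g (Y ω, V ω)
      - ((1 - R ω) / (1 - π (V ω))) * h ω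
      = φ ω * R ω - ψ ω * (1 - R ω) := by
    intro ω; rw [hφdef, hψdef]; ring
  calc ∫ ω, ((R ω / π (V ω)) * g (Y ω, V ω) - ((1 - R ω) / (1 - π (V ω))) * h ω) ∂P
      = ∫ ω, (φ ω * R ω - ψ ω * (1 - R ω)) ∂P := by
        exact integral_congr_ae (Filter.Eventually.of_forall hintegrand)
    _ = (∫ ω, φ ω * R ω ∂P) - ∫ ω, ψ ω * (1 - R ω) ∂P := integral_sub intφR intψ1R
    _ = 0 := by
        have T1 : ∫ ω, φ ω * R ω ∂P = ∫ ω, g (Y ω, V ω) ∂P := by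
          have hφ_sm : StronglyMeasurable[MeasurableSpace.comap
              (fun ω => (V ω, Y ω)) inferInstance] φ := by
            have hpm : Measurable[MeasurableSpace.comap (fun ω => (V ω, Y ω)) inferInstance]
                (fun ω => (V ω, Y ω)) := Measurable.of_comap_le le_rfl
            exact (((hg.comp (measurable_snd.prodMk measurable_fst)).div
              (hπ.comp measurable_fst)).comp hpm).stronglyMeasurable
          have hmul : P[(fun ω => φ ω * R ω)
                | MeasurableSpace.comap (fun ω => (V ω, Y ω)) inferInstance]
              =ᵐ[P] fun ω => φ ω *
                (P[R | MeasurableSpace.comap (fun ω => (V ω, Y ω)) inferInstance]) ω :=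
            condExp_mul_of_stronglyMeasurable_left hφ_sm intφR intR
          calc ∫ ω, φ ω * R ω ∂P
              = ∫ ω, (P[(fun ω => φ ω * R ω)
                  | MeasurableSpace.comap (fun ω => (V ω, Y ω)) inferInstance]) ω ∂P :=
                (integral_condExp hVY.comap_le).symm
            _ = ∫ ω, φ ω * π (V ω) ∂P := by
                refine integral_congr_ae ?_
                filter_upwards [hmul, hRY] with ω h1 h2
                rw [h1, h2]
            _ = ∫ ω, g (Y ω, V ω) ∂P := by
                refine integral_congr_ae ?_
                filter_upwards [hpos] with ω ⟨h1, _⟩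
                rw [hφdef]
                exact div_mul_cancel₀ _ (ne_of_gt (lt_of_lt_of_le hδ0 h1))
        have T2 : ∫ ω, ψ ω * (1 - R ω) ∂P = ∫ ω, g (Y ω, V ω) ∂P := by
          have hpm : Measurable[MeasurableSpace.comap (fun ω => (V ω, L ω)) inferInstance]
              (fun ω => (V ω, L ω)) := Measurable.of_comap_le le_rfl
          have hψ_sm : StronglyMeasurable[MeasurableSpace.comap
              (fun ω => (V ω, L ω)) inferInstance] ψ := by
            rw [hψdef, hdef]
            exact (stronglyMeasurable_condExp.measurable.div
              (measurable_const.sub ((hπ.comp measurable_fst).comp hpm))).stronglyMeasurable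
          have hmul : P[(fun ω => ψ ω * (1 - R ω))
                | MeasurableSpace.comap (fun ω => (V ω, L ω)) inferInstance]
              =ᵐ[P] fun ω => ψ ω *
                (P[(fun ω => 1 - R ω)
                  | MeasurableSpace.comap (fun ω => (V ω, L ω)) inferInstance]) ω :=
            condExp_mul_of_stronglyMeasurable_left hψ_sm intψ1R int1R
          have h1R : P[(fun ω => 1 - R ω)
                | MeasurableSpace.comap (fun ω => (V ω, L ω)) inferInstance]
              =ᵐ[P] fun ω => 1 - π (V ω) := by
            have hsub := condExp_sub (μ := P)
              (m := MeasurableSpace.comap (fun ω => (V ω, L ω)) inferInstance)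
              (integrable_const (1:ℝ)) intR
            have hc := condExp_const (μ := P) hVL.comap_le (1:ℝ)
            filter_upwards [hsub, hRL] with ω hω h2
            have : ((fun _ : Ω => (1:ℝ)) - R) ω = 1 - R ω := rfl
            rw [show (fun ω => 1 - R ω) = ((fun _ : Ω => (1:ℝ)) - R) from rfl]
            calc (P[((fun _ : Ω => (1:ℝ)) - R)
                  | MeasurableSpace.comap (fun ω => (V ω, L ω)) inferInstance]) ω
                = (P[(fun _ : Ω => (1:ℝ))
                    | MeasurableSpace.comap (fun ω => (V ω, L ω)) inferInstance]) ω
                  - (P[R | MeasurableSpace.comap (fun ω => (V ω, L ω)) inferInstance]) ω := hω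
              _ = 1 - π (V ω) := by rw [hc, h2]
          calc ∫ ω, ψ ω * (1 - R ω) ∂P
              = ∫ ω, (P[(fun ω => ψ ω * (1 - R ω))
                  | MeasurableSpace.comap (fun ω => (V ω, L ω)) inferInstance]) ω ∂P :=
                (integral_condExp hVL.comap_le).symm
            _ = ∫ ω, ψ ω * (1 - π (V ω)) ∂P := by
                refine integral_congr_ae ?_
                filter_upwards [hmul, h1R] with ω ha hb
                rw [ha, hb]
            _ = ∫ ω, h ω ∂P := by
                refine integral_congr_ae ?_
                filter_upwards [hpos] with ω ⟨_, h2⟩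
                rw [hψdef]
                exact div_mul_cancel₀ _ (by linarith : (1:ℝ) - π (V ω) ≠ 0)
            _ = ∫ ω, g (Y ω, V ω) ∂P := by
                rw [hdef]
                exact integral_condExp hVL.comap_le
        rw [T1, T2, sub_self]
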